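/- One has the power series identity 32K(r) − 32E(r) − 14r²K(r) − 3r⁴K(r) − 2r²E(r) = (3π/2) Σ_{n=3}^{∞} [n(5n−6)(n−1)(n−2) ((1/2)_{n−2})² / (n!)²] r^{2n} for r ∈ (0,1), where (a)_n is the Pochhammer symbol. -/

import Mathlib

open Real MeasureTheory

/-- Rising factorial (Pochhammer symbol) of a real number. -/
noncomputable def poch (a : ℝ) (n : ℕ) : ℝ := ∏ i ∈ Finset.range n, (a + i)

/-- Complete elliptic integral of the first kind. -/
noncomputable def ellipticK (r : ℝ) : ℝ :=
  ∫ t in (0:ℝ)..(π / 2), 1 / Real.sqrt (1 - r ^ 2 * Real.sin t ^ 2)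

/-- Complete elliptic integral of the second kind. -/
noncomputable def ellipticE (r : ℝ) : ℝ :=
  ∫ t in (0:ℝ)..(π / 2), Real.sqrt (1 - r ^ 2 * Real.sin t ^ 2)

noncomputable def cc (n : ℕ) : ℝ := poch (1/2) n / n.factorial
noncomputable def dd (n : ℕ) : ℝ := poch (-(1/2)) n / n.factorial

lemma poch_succ (a : ℝ) (n : ℕ) : poch a (n+1) = poch a n * (a + n) := by
  simp [poch, Finset.prod_range_succ]

lemma poch_neg_half_succ (n : ℕ) : poch (-(1/2)) (n+1) = -(1/2) * poch (1/2) n := by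
  rw [poch, poch, Finset.prod_range_succ']
  simp only [Nat.cast_zero, add_zero, Nat.cast_add, Nat.cast_one]
  rw [mul_comm]
  congr 1
  apply Finset.prod_congr rfl
  intro i _
  ring

lemma poch_nonneg (n : ℕ) : 0 ≤ poch (1/2) n :=
  Finset.prod_nonneg fun i _ => by positivity

lemma cc_zero : cc 0 = 1 := by simp [cc, poch]

lemma cc_succ (n : ℕ) : cc (n+1) = cc n * ((1/2 + n) / (n + 1)) := by
  have h1 : ((n+1).factorial : ℝ) = (n+1) * n.factorial := by
    rw [Nat.factorial_succ]; push_cast; ring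
  rw [cc, cc, poch_succ, h1, div_mul_div_comm]
  ring

lemma cc_nonneg (n : ℕ) : 0 ≤ cc n := by
  apply div_nonneg (poch_nonneg n) (by positivity)

lemma cc_le_one (n : ℕ) : cc n ≤ 1 := by
  induction n with
  | zero => simp [cc_zero]
  | succ k ih =>
    rw [cc_succ]
    have h : (1/2 + (k:ℝ)) / (k + 1) ≤ 1 := by
      rw [div_le_one (by positivity)]; linarith
    calc cc k * ((1/2 + (k:ℝ)) / (k + 1)) ≤ 1 * 1 :=
          mul_le_mul ih h (by positivity) one_pos.le
      _ = 1 := by ring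

lemma abs_cc_le_one (n : ℕ) : |cc n| ≤ 1 :=
  abs_le.mpr ⟨by linarith [cc_nonneg n], cc_le_one n⟩

lemma dd_succ (n : ℕ) : dd (n+1) = cc (n+1) - cc n := by
  have h2 : (n.factorial : ℝ) ≠ 0 := Nat.cast_ne_zero.mpr n.factorial_ne_zero
  have h3 : ((n:ℝ) + 1) ≠ 0 := by positivity
  have h1 : ((n+1).factorial : ℝ) = (n+1) * n.factorial := by
    rw [Nat.factorial_succ]; push_cast; ring
  rw [dd, cc, cc, poch_neg_half_succ, poch_succ, h1]
  field_simp
  ring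

lemma dd_zero : dd 0 = 1 := by simp [dd, poch]

lemma abs_dd_le_one (n : ℕ) : |dd n| ≤ 1 := by
  cases n with
  | zero => simp [dd_zero]
  | succ k =>
    rw [dd_succ, abs_le]
    constructor
    · have := cc_nonneg (k+1); have := cc_le_one k; linarith
    · have := cc_le_one (k+1); have := cc_nonneg k; linarith

noncomputable def SS (n : ℕ) : ℝ := ∑ k ∈ Finset.range (n+1), cc k * cc (n - k)
noncomputable def TT (n : ℕ) : ℝ := ∑ k ∈ Finset.range (n+1), (k : ℝ) * (cc k * cc (n - k))

lemma two_TT (n : ℕ) : 2 * TT n = n * SS n := by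
  have h := Finset.sum_range_reflect (fun k => (k : ℝ) * (cc k * cc (n - k))) (n+1)
  have h2 : ∀ k ∈ Finset.range (n+1),
      ((n + 1 - 1 - k : ℕ) : ℝ) * (cc (n + 1 - 1 - k) * cc (n - (n + 1 - 1 - k)))
        = ((n : ℝ) - k) * (cc (n - k) * cc k) := by
    intro k hk
    have hk' : k ≤ n := Nat.lt_succ_iff.mp (Finset.mem_range.mp hk)
    have e1 : n + 1 - 1 - k = n - k := by omega
    have e2 : n - (n - k) = k := by omega
    rw [e1, e2, Nat.cast_sub hk']
  rw [Finset.sum_congr rfl h2] at h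
  have : 2 * TT n = TT n + TT n := by ring
  rw [this]
  nth_rewrite 1 [TT]
  rw [← h, TT, SS, ← Finset.sum_add_distrib, Finset.mul_sum]
  apply Finset.sum_congr rfl
  intro k hk
  ring

lemma TT_succ (n : ℕ) : TT (n+1) = TT n + (1/2) * SS n := by
  rw [TT, Finset.sum_range_succ']
  simp only [Nat.cast_zero, zero_mul, add_zero]
  rw [TT, SS, Finset.mul_sum, ← Finset.sum_add_distrib]
  apply Finset.sum_congr rfl
  intro k hk
  have h1 : n + 1 - (k + 1) = n - k := by omega
  rw [h1, cc_succ]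
  have h3 : ((k:ℝ) + 1) ≠ 0 := by positivity
  push_cast
  field_simp
  ring

lemma SS_eq_one (n : ℕ) : SS n = 1 := by
  induction n with
  | zero => simp [SS, cc_zero]
  | succ k ih =>
    have h1 := two_TT (k+1)
    have h2 := TT_succ k
    have h3 := two_TT k
    have h4 : ((k:ℝ) + 1) ≠ 0 := by positivity
    push_cast at h1
    have : ((k:ℝ)+1) * SS (k+1) = ((k:ℝ)+1) * SS k := by
      rw [← h1, h2]; rw [ih] at h3 ⊢; linarith
    rw [ih] at this
    field_simp at this
    linarith [this]

lemma summable_cc_pow {x : ℝ} (hx : x ∈ Set.Ico (0:ℝ) 1) :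
    Summable (fun n => cc n * x ^ n) := by
  obtain ⟨hx0, hx1⟩ := hx
  apply Summable.of_nonneg_of_le (fun n => mul_nonneg (cc_nonneg n) (pow_nonneg hx0 n))
    (fun n => ?_) (summable_geometric_of_lt_one hx0 hx1)
  calc cc n * x ^ n ≤ 1 * x ^ n := by
        apply mul_le_mul_of_nonneg_right (cc_le_one n) (by positivity)
    _ = x ^ n := one_mul _

lemma hasSum_g {x : ℝ} (hx : x ∈ Set.Ico (0:ℝ) 1) :
    HasSum (fun n => cc n * x ^ n) (1 / Real.sqrt (1 - x)) := by
  obtain ⟨hx0, hx1⟩ := hx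
  have hsum := summable_cc_pow ⟨hx0, hx1⟩
  have hnorm : Summable (fun n => ‖cc n * x ^ n‖) := by
    have : ∀ n, ‖cc n * x ^ n‖ = cc n * x ^ n := fun n =>
      Real.norm_of_nonneg (mul_nonneg (cc_nonneg n) (pow_nonneg hx0 n))
    rw [funext this]; exact hsum
  set g := ∑' n, cc n * x ^ n with hg
  have key : g * g = 1 / (1 - x) := by
    rw [hg, tsum_mul_tsum_eq_tsum_sum_range_of_summable_norm hnorm hnorm]
    have h1 : ∀ n : ℕ, ∑ k ∈ Finset.range (n+1), (cc k * x ^ k) * (cc (n-k) * x ^ (n-k))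
        = x ^ n := by
      intro n
      have : ∀ k ∈ Finset.range (n+1), (cc k * x ^ k) * (cc (n-k) * x ^ (n-k))
          = (cc k * cc (n-k)) * x ^ n := by
        intro k hk
        have hk' : k ≤ n := Nat.lt_succ_iff.mp (Finset.mem_range.mp hk)
        rw [show (cc k * x ^ k) * (cc (n-k) * x ^ (n-k))
            = (cc k * cc (n-k)) * (x^k * x^(n-k)) by ring,
          ← pow_add, Nat.add_sub_cancel' hk']
      rw [Finset.sum_congr rfl this, ← Finset.sum_mul]
      have := SS_eq_one n
      rw [SS] at this
      rw [this, one_mul]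
    rw [funext h1, tsum_geometric_of_lt_one hx0 hx1, one_div]
  have hgnn : 0 ≤ g := tsum_nonneg (fun n => mul_nonneg (cc_nonneg n) (pow_nonneg hx0 n))
  have h1x : (0:ℝ) < 1 - x := by linarith
  have hgval : g = 1 / Real.sqrt (1 - x) := by
    have h2 : g ^ 2 = (1 / Real.sqrt (1 - x)) ^ 2 := by
      rw [sq, key, div_pow, one_pow, sq_sqrt h1x.le]
    have hpos : 0 ≤ 1 / Real.sqrt (1 - x) := by positivity
    calc g = Real.sqrt (g ^ 2) := (Real.sqrt_sq hgnn).symm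
      _ = Real.sqrt ((1 / Real.sqrt (1 - x)) ^ 2) := by rw [h2]
      _ = 1 / Real.sqrt (1 - x) := Real.sqrt_sq hpos
  rw [← hgval]
  exact hsum.hasSum

lemma hasSum_h {x : ℝ} (hx : x ∈ Set.Ico (0:ℝ) 1) :
    HasSum (fun n => dd n * x ^ n) (Real.sqrt (1 - x)) := by
  obtain ⟨hx0, hx1⟩ := hx
  have h1 := hasSum_g ⟨hx0, hx1⟩
  have h2 := h1.mul_left x
  set sh : ℕ → ℝ := fun n => match n with
    | 0 => 0
    | (m+1) => cc m * x ^ (m+1) with hsh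
  have h3 : HasSum sh (x * (1 / Real.sqrt (1 - x))) := by
    rw [← Function.Injective.hasSum_iff Nat.succ_injective (f := sh) ?_]
    · have : (sh ∘ Nat.succ) = fun n => x * (cc n * x ^ n) := by
        funext n
        simp only [Function.comp, hsh]
        ring
      rw [this]
      exact h2
    · intro m hm
      have : m = 0 := by
        cases m with
        | zero => rfl
        | succ k => exact absurd ⟨k, rfl⟩ hm
      simp [this, hsh]
  have h4 := h1.sub h3
  have hfn : (fun n => cc n * x ^ n - sh n) = fun n => dd n * x ^ n := by
    funext n
    cases n with
    | zero => simp [hsh, dd_zero, cc_zero]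
    | succ m => rw [hsh]; simp only [dd_succ]; ring
  rw [hfn] at h4
  have hval : 1 / Real.sqrt (1 - x) - x * (1 / Real.sqrt (1 - x)) = Real.sqrt (1 - x) := by
    have h1x : (0:ℝ) ≤ 1 - x := by linarith
    rw [← Real.div_sqrt (x := 1 - x)]
    have hs : Real.sqrt (1 - x) ≠ 0 := by
      rw [ne_eq, Real.sqrt_eq_zero h1x]
      intro h; linarith
    field_simp
    exact Real.sq_sqrt h1x
  rwa [hval] at h4

lemma integral_sin_pow_half (n : ℕ) :
    ∫ t in (0:ℝ)..(π/2), Real.sin t ^ (2*n) = (π/2) * cc n := by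
  have hc : Continuous (fun t : ℝ => Real.sin t ^ (2*n)) := by continuity
  have hsymm : (∫ t in (0:ℝ)..(π/2), Real.sin t ^ (2*n))
      = ∫ t in (π/2:ℝ)..π, Real.sin t ^ (2*n) := by
    have := intervalIntegral.integral_comp_sub_left (fun x => Real.sin x ^ (2*n)) π
      (a := π/2) (b := π)
    simp only [Real.sin_pi_sub] at this
    have e1 : π - π = 0 := by ring
    have e2 : π - π/2 = π/2 := by ring
    rw [e1, e2] at this
    exact this.symm
  have hsplit : (∫ t in (0:ℝ)..(π/2), Real.sin t ^ (2*n))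
      + (∫ t in (π/2:ℝ)..π, Real.sin t ^ (2*n)) = ∫ t in (0:ℝ)..π, Real.sin t ^ (2*n) :=
    intervalIntegral.integral_add_adjacent_intervals
      (hc.intervalIntegrable _ _) (hc.intervalIntegrable _ _)
  have heven := integral_sin_pow_even (n := n)
  have hprod : (∏ i ∈ Finset.range n, (2*(i:ℝ)+1)/(2*i+2)) = cc n := by
    have hfac : (n.factorial : ℝ) = ∏ i ∈ Finset.range n, ((i:ℝ)+1) := by
      rw [← Finset.prod_range_add_one_eq_factorial]
      push_cast
      rfl
    rw [cc, poch, hfac, ← Finset.prod_div_distrib]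
    apply Finset.prod_congr rfl
    intro i _
    have h1 : (2*(i:ℝ)+2) ≠ 0 := by positivity
    have h2 : ((i:ℝ)+1) ≠ 0 := by positivity
    rw [div_eq_div_iff h1 h2]
    ring
  rw [← hsymm] at hsplit
  rw [heven, hprod] at hsplit
  linarith

lemma hasSum_elliptic_integral (cf : ℕ → ℝ) (hcf : ∀ n, |cf n| ≤ 1) (G : ℝ → ℝ)
    (hG : ∀ x ∈ Set.Ico (0:ℝ) 1, HasSum (fun n => cf n * x ^ n) (G x))
    {r : ℝ} (hr : r ∈ Set.Ioo (0:ℝ) 1) :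
    HasSum (fun n => (π/2) * (cf n * cc n) * r ^ (2*n))
      (∫ t in (0:ℝ)..(π/2), G (r^2 * Real.sin t ^ 2)) := by
  obtain ⟨hr0, hr1⟩ := hr
  have hr2 : r^2 < 1 := by nlinarith
  have hr2nn : (0:ℝ) ≤ r^2 := sq_nonneg r
  set μ := volume.restrict (Set.Ioc (0:ℝ) (π/2)) with hμ
  set F : ℕ → ℝ → ℝ := fun n t => cf n * (r^2 * Real.sin t ^ 2) ^ n with hF
  have hmem : ∀ t : ℝ, r^2 * Real.sin t ^ 2 ∈ Set.Ico (0:ℝ) 1 := by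
    intro t
    constructor
    · positivity
    · have hs : Real.sin t ^ 2 ≤ 1 := sin_sq_le_one t
      nlinarith
  have hFc : ∀ n, Continuous (F n) := by
    intro n; apply Continuous.mul continuous_const
    exact (Continuous.mul continuous_const ((Real.continuous_sin).pow 2)).pow n
  have hF_int : ∀ n, Integrable (F n) μ := fun n => (hFc n).integrableOn_Ioc
  have hbound : ∀ n t, ‖F n t‖ ≤ (r^2) ^ n := by
    intro n t
    rw [hF, norm_mul, norm_pow]
    have h1 : ‖r^2 * Real.sin t ^ 2‖ ≤ r^2 := by
      rw [Real.norm_of_nonneg (by positivity)]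
      nlinarith [sin_sq_le_one t, sq_nonneg r]
    calc ‖cf n‖ * ‖r^2 * Real.sin t ^ 2‖ ^ n ≤ 1 * (r^2)^n := by
          apply mul_le_mul (hcf n) (pow_le_pow_left₀ (norm_nonneg _) h1 n)
            (by positivity) one_pos.le
      _ = (r^2)^n := one_mul _
  have hμIoc : (μ Set.univ).toReal = π/2 := by
    rw [hμ, Measure.restrict_apply_univ, Real.volume_Ioc, sub_zero,
      ENNReal.toReal_ofReal (by positivity)]
  have hF_sum : Summable (fun n => ∫ t, ‖F n t‖ ∂μ) := by
    apply Summable.of_nonneg_of_le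
      (fun n => integral_nonneg (fun t => norm_nonneg _)) (fun n => ?_)
      (Summable.mul_left (π/2) (summable_geometric_of_lt_one hr2nn hr2))
    calc ∫ t, ‖F n t‖ ∂μ ≤ ∫ _t, (r^2)^n ∂μ := by
          apply integral_mono ((hF_int n).norm) (integrable_const _)
          intro t; exact hbound n t
      _ = (μ Set.univ).toReal * (r^2)^n := by rw [integral_const]; simp [smul_eq_mul]; left; rfl
      _ = π/2 * (r^2)^n := by rw [hμIoc]
  have hswap := hasSum_integral_of_summable_integral_norm (μ := μ) hF_int hF_sum
  have htsum : ∀ t : ℝ, ∑' n, F n t = G (r^2 * Real.sin t ^ 2) := fun t =>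
    (hG _ (hmem t)).tsum_eq
  rw [funext htsum] at hswap
  have hInt : ∀ n, ∫ t, F n t ∂μ = (π/2) * (cf n * cc n) * r ^ (2*n) := by
    intro n
    have h1 : ∀ t, F n t = (cf n * r ^ (2*n)) * Real.sin t ^ (2*n) := by
      intro t
      rw [hF]
      simp only [mul_pow, ← pow_mul]
      ring
    rw [funext h1, hμ]
    rw [← intervalIntegral.integral_of_le (by positivity : (0:ℝ) ≤ π/2)]
    rw [intervalIntegral.integral_const_mul, integral_sin_pow_half]
    ring
  rw [funext hInt] at hswap
  rwa [intervalIntegral.integral_of_le (by positivity : (0:ℝ) ≤ π/2)]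

theorem f5_series (r : ℝ) (hr : r ∈ Set.Ioo (0:ℝ) 1) :
    32 * ellipticK r - 32 * ellipticE r - 14 * r ^ 2 * ellipticK r
        - 3 * r ^ 4 * ellipticK r - 2 * r ^ 2 * ellipticE r
      = (3 * π / 2) *
        ∑' n : ℕ,
          ((n : ℝ) * (5 * (n : ℝ) - 6) * ((n : ℝ) - 1) * ((n : ℝ) - 2) *
              (poch (1 / 2) (n - 2)) ^ 2 / ((n.factorial : ℝ)) ^ 2) * r ^ (2 * n) := by
  have hK : HasSum (fun n => (π/2) * (cc n * cc n) * r ^ (2*n)) (ellipticK r) := by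
    have h := hasSum_elliptic_integral cc abs_cc_le_one
      (fun x => 1 / Real.sqrt (1 - x)) (fun x hx => hasSum_g hx) hr
    exact h
  have hE : HasSum (fun n => (π/2) * (dd n * cc n) * r ^ (2*n)) (ellipticE r) := by
    have h := hasSum_elliptic_integral dd abs_dd_le_one
      (fun x => Real.sqrt (1 - x)) (fun x hx => hasSum_h hx) hr
    exact h
  -- shifted series
  set A1 : ℕ → ℝ := fun n => match n with
    | 0 => 0
    | (m+1) => (π/2) * (cc m * cc m) * r ^ (2*(m+1)) with hA1def
  set A2 : ℕ → ℝ := fun n => match n with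
    | 0 => 0
    | 1 => 0
    | (m+2) => (π/2) * (cc m * cc m) * r ^ (2*(m+2)) with hA2def
  set B1 : ℕ → ℝ := fun n => match n with
    | 0 => 0
    | (m+1) => (π/2) * (dd m * cc m) * r ^ (2*(m+1)) with hB1def
  have hA1 : HasSum A1 (r^2 * ellipticK r) := by
    rw [← Function.Injective.hasSum_iff Nat.succ_injective (f := A1) ?_]
    · have : (A1 ∘ Nat.succ) = fun n => r^2 * ((π/2) * (cc n * cc n) * r ^ (2*n)) := by
        funext n
        simp only [Function.comp, hA1def]
        ring
      rw [this]
      exact hK.mul_left (r^2)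
    · intro m hm
      cases m with
      | zero => simp [hA1def]
      | succ k => exact absurd ⟨k, rfl⟩ hm
  have hA2 : HasSum A2 (r^4 * ellipticK r) := by
    have hinj : Function.Injective (fun n : ℕ => n + 2) := fun a b h => by simp only [] at h; omega
    rw [← Function.Injective.hasSum_iff hinj (f := A2) ?_]
    · have : (A2 ∘ (fun n : ℕ => n + 2)) = fun n => r^4 * ((π/2) * (cc n * cc n) * r ^ (2*n)) := by
        funext n
        simp only [Function.comp, hA2def]
        ring
      rw [this]
      exact hK.mul_left (r^4)
    · intro m hm
      match m with
      | 0 => simp [hA2def]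
      | 1 => simp [hA2def]
      | (k+2) => exact absurd ⟨k, rfl⟩ hm
  have hB1 : HasSum B1 (r^2 * ellipticE r) := by
    rw [← Function.Injective.hasSum_iff Nat.succ_injective (f := B1) ?_]
    · have : (B1 ∘ Nat.succ) = fun n => r^2 * ((π/2) * (dd n * cc n) * r ^ (2*n)) := by
        funext n
        simp only [Function.comp, hB1def]
        ring
      rw [this]
      exact hE.mul_left (r^2)
    · intro m hm
      cases m with
      | zero => simp [hB1def]
      | succ k => exact absurd ⟨k, rfl⟩ hm
  have htot := ((((hK.mul_left 32).sub (hE.mul_left 32)).sub (hA1.mul_left 14)).sub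
    (hA2.mul_left 3)).sub (hB1.mul_left 2)
  have hfun : (fun n => 32 * ((π/2) * (cc n * cc n) * r ^ (2*n))
        - 32 * ((π/2) * (dd n * cc n) * r ^ (2*n)) - 14 * A1 n - 3 * A2 n - 2 * B1 n)
      = fun (n : ℕ) => 3 * π / 2 *
          (((n : ℝ) * (5 * (n : ℝ) - 6) * ((n : ℝ) - 1) * ((n : ℝ) - 2) *
            (poch (1 / 2) (n - 2)) ^ 2 / ((n.factorial : ℝ)) ^ 2) * r ^ (2 * n)) := by
    funext n
    match n with
    | 0 =>
      simp [hA1def, hA2def, hB1def, cc_zero, dd_zero]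
    | 1 =>
      have hc1 : cc 1 = 1/2 := by
        rw [show cc 1 = cc (0 + 1) from rfl, cc_succ, cc_zero]
        norm_num
      have hd1 : dd 1 = -(1/2) := by
        rw [show dd 1 = dd (0 + 1) from rfl, dd_succ, cc_succ, cc_zero]
        norm_num
      simp only [hA1def, hA2def, hB1def, hc1, hd1, cc_zero, dd_zero]
      norm_num
      ring
    | (m+2) =>
      have hF : ((m.factorial:ℝ)) ≠ 0 := Nat.cast_ne_zero.mpr m.factorial_ne_zero
      have hm1 : ((m:ℝ)+1) ≠ 0 := by positivity
      have hm2 : ((m:ℝ)+2) ≠ 0 := by positivity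
      have hfac : (((m+2).factorial:ℝ)) = ((m:ℝ)+2)*((m:ℝ)+1)*(m.factorial:ℝ) := by
        rw [show m+2 = (m+1)+1 by rfl, Nat.factorial_succ, Nat.factorial_succ]
        push_cast; ring
      have hsub : m + 2 - 2 = m := by omega
      show 32 * ((π/2) * (cc (m+2) * cc (m+2)) * r ^ (2*(m+2)))
          - 32 * ((π/2) * (dd (m+2) * cc (m+2)) * r ^ (2*(m+2)))
          - 14 * ((π/2) * (cc (m+1) * cc (m+1)) * r ^ (2*(m+2)))
          - 3 * ((π/2) * (cc m * cc m) * r ^ (2*(m+2)))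
          - 2 * ((π/2) * (dd (m+1) * cc (m+1)) * r ^ (2*(m+2)))
        = 3 * π / 2 *
          ((((m+2:ℕ) : ℝ) * (5 * ((m+2:ℕ) : ℝ) - 6) * (((m+2:ℕ) : ℝ) - 1) * (((m+2:ℕ) : ℝ) - 2) *
            (poch (1 / 2) (m + 2 - 2)) ^ 2 / (((m+2).factorial : ℝ)) ^ 2) * r ^ (2 * (m+2)))
      rw [hsub, dd_succ, dd_succ, show m+2 = (m+1)+1 from rfl, cc_succ, cc_succ, hfac,
        show cc m = poch (1/2) m / m.factorial from rfl]
      push_cast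
      field_simp
      ring
  rw [hfun] at htot
  rw [← tsum_mul_left, htot.tsum_eq]
  ring
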